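/- A topological space X is core compact if and only if the set G = {(x, U) ∈ X × O(X) : x ∈ U} is open in the product X × ΣO(X), where O(X) carries the Scott topology of the inclusion order. -/
import Mathlib


open Set TopologicalSpace

universe u

section OrderDefs

variable {X : Type u}

/-- `U` is an upper set with respect to the relation `le`. -/
def IsUpperSetWrt (le : X → X → Prop) (U : Set X) : Prop :=
  ∀ ⦃x⦄, x ∈ U → ∀ ⦃y⦄, le x y → y ∈ U

/-- `s` is an upper bound of `D` with respect to `le`. -/
def IsUBWrt (le : X → X → Prop) (D : Set X) (s : X) : Prop := ∀ d ∈ D, le d s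

/-- `s` is a least upper bound (supremum) of `D` with respect to `le`. -/
def IsSupWrt (le : X → X → Prop) (D : Set X) (s : X) : Prop :=
  IsUBWrt le D s ∧ ∀ t, IsUBWrt le D t → le s t

/-- `D` is a (nonempty) directed subset with respect to `le`. -/
def DirectedSubset (le : X → X → Prop) (D : Set X) : Prop :=
  D.Nonempty ∧ ∀ a ∈ D, ∀ b ∈ D, ∃ c ∈ D, le a c ∧ le b c

/-- `U` is Scott open with respect to `le`: an upper set inaccessible by directed suprema. -/
def ScottOpenWrt (le : X → X → Prop) (U : Set X) : Prop :=
  IsUpperSetWrt le U ∧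
    ∀ D, DirectedSubset le D → ∀ s, IsSupWrt le D s → s ∈ U → (D ∩ U).Nonempty

/-- The Scott topology determined by the relation `le`. -/
def scottTop (le : X → X → Prop) : TopologicalSpace X where
  IsOpen := ScottOpenWrt le
  isOpen_univ := by
    refine ⟨fun x _ y _ => trivial, fun D hD s _ _ => ?_⟩
    obtain ⟨d, hd⟩ := hD.1
    exact ⟨d, hd, trivial⟩
  isOpen_inter := by
    rintro U V ⟨hUup, hUd⟩ ⟨hVup, hVd⟩
    refine ⟨fun x hx y hxy => ⟨hUup hx.1 hxy, hVup hx.2 hxy⟩, ?_⟩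
    rintro D hD s hs ⟨hsU, hsV⟩
    obtain ⟨a, haD, haU⟩ := hUd D hD s hs hsU
    obtain ⟨b, hbD, hbV⟩ := hVd D hD s hs hsV
    obtain ⟨c, hcD, hac, hbc⟩ := hD.2 a haD b hbD
    exact ⟨c, hcD, hUup haU hac, hVup hbV hbc⟩
  isOpen_sUnion := by
    intro S hS
    refine ⟨fun x hx y hxy => ?_, ?_⟩
    · obtain ⟨U, hU, hxU⟩ := hx
      exact ⟨U, hU, (hS U hU).1 hxU hxy⟩
    · rintro D hD s hs ⟨U, hU, hsU⟩
      obtain ⟨d, hdD, hdU⟩ := (hS U hU).2 D hD s hs hsU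
      exact ⟨d, hdD, U, hU, hdU⟩

end OrderDefs

section TopDefs

variable {X : Type u} [TopologicalSpace X]

/-- The specialization order of a topological space: `x ≤ y` iff `x ∈ cl {y}`. -/
def specLE (x y : X) : Prop := x ∈ closure ({y} : Set X)

/-- The upward closure of `A` in the specialization order. -/
def upSet (A : Set X) : Set X := {y | ∃ a ∈ A, specLE a y}

/-- `V` is way below `U`: every open cover of `U` admits a finite subfamily covering `V`. -/
def WayBelow (V U : Set X) : Prop :=
  ∀ S : Set (Set X), (∀ W ∈ S, IsOpen W) → U ⊆ ⋃₀ S →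
    ∃ F : Finset (Set X), ↑F ⊆ S ∧ V ⊆ ⋃₀ (F : Set (Set X))

/-- A space is core compact if its lattice of open sets is continuous, i.e. every open
set is the union of the open sets way below it. -/
def CoreCompact (X : Type u) [TopologicalSpace X] : Prop :=
  ∀ U : Set X, IsOpen U → ∀ x ∈ U, ∃ V : Set X, IsOpen V ∧ x ∈ V ∧ WayBelow V U

/-- `V` is open in the core compactly generated topology:
preimages under every continuous map from a core compact space are open. -/
def ccgOpen (X : Type u) [TopologicalSpace X] (V : Set X) : Prop :=
  ∀ (C : Type u) (tC : TopologicalSpace C), CoreCompact C →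
    ∀ ρ : C → X, Continuous ρ → IsOpen (ρ ⁻¹' V)

/-- The core compactly generated topology `𝒞X`. -/
def ccgTopology (X : Type u) [TopologicalSpace X] : TopologicalSpace X where
  IsOpen := ccgOpen X
  isOpen_univ := by intro C tC _ ρ hρ; simpa using isOpen_univ
  isOpen_inter := by
    intro U V hU hV C tC hc ρ hρ
    exact (hU C tC hc ρ hρ).inter (hV C tC hc ρ hρ)
  isOpen_sUnion := by
    intro S hS C tC hc ρ hρ
    rw [preimage_sUnion]
    exact isOpen_biUnion fun t ht => hS t ht C tC hc ρ hρ

/-- A space is core compactly generated if its topology coincides with the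
core compactly generated topology. -/
def CCGenerated (X : Type u) [t : TopologicalSpace X] : Prop := ccgTopology X = t

/-- A set is saturated if it is the intersection of the open sets containing it. -/
def Saturated (K : Set X) : Prop := K = ⋂₀ {U : Set X | IsOpen U ∧ K ⊆ U}

/-- A T₀ space is well-filtered if every filtered family of nonempty compact saturated sets
whose intersection is contained in an open set has a member contained in that open set. -/
def WellFiltered (X : Type u) [TopologicalSpace X] : Prop :=
  T0Space X ∧ ∀ 𝒦 : Set (Set X), 𝒦.Nonempty →
    (∀ K ∈ 𝒦, K.Nonempty ∧ IsCompact K ∧ Saturated K) →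
    (∀ K₁ ∈ 𝒦, ∀ K₂ ∈ 𝒦, ∃ K₃ ∈ 𝒦, K₃ ⊆ K₁ ∧ K₃ ⊆ K₂) →
    ∀ U : Set X, IsOpen U → ⋂₀ 𝒦 ⊆ U → ∃ K ∈ 𝒦, K ⊆ U

/-- A T₀ space is ω-well-filtered if the well-filteredness condition holds for
countable filtered families of nonempty compact saturated sets. -/
def OmegaWellFiltered (X : Type u) [TopologicalSpace X] : Prop :=
  T0Space X ∧ ∀ K : ℕ → Set X,
    (∀ n, (K n).Nonempty ∧ IsCompact (K n) ∧ Saturated (K n)) →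
    (∀ m n, ∃ k, K k ⊆ K m ∧ K k ⊆ K n) →
    ∀ U : Set X, IsOpen U → (⋂ n, K n) ⊆ U → ∃ n, K n ⊆ U

/-- A space is sober if it is T₀ and every irreducible closed set is the closure of a
(unique) point. -/
def SoberSpace (X : Type u) [TopologicalSpace X] : Prop :=
  T0Space X ∧ ∀ A : Set X, IsIrreducible A → IsClosed A → ∃! x : X, A = closure ({x} : Set X)

/-- A T₀ space is a monotone convergence space if the closure of every directed subset
(in the specialization order) is the closure of a point. -/
def MonotoneConvergenceSpace (X : Type u) [TopologicalSpace X] : Prop :=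
  T0Space X ∧ ∀ D : Set X, DirectedSubset specLE D → ∃ x : X, closure D = closure ({x} : Set X)

/-- The hull-kernel style topology on a family of subsets of `X`, generated by the sets
`U^s = {A | A ∩ U ≠ ∅}` for `U` open in `X`. -/
def hullTop (S : Set X → Prop) : TopologicalSpace {A : Set X // S A} :=
  generateFrom {s : Set {A : Set X // S A} |
    ∃ U : Set X, IsOpen U ∧ s = {A : {A : Set X // S A} | ((A : Set X) ∩ U).Nonempty}}

end TopDefs

section Aux

variable {X : Type u} [TopologicalSpace X]

lemma wayBelow_subset {V U : Set X} (hU : IsOpen U) (h : WayBelow V U) : V ⊆ U := by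
  obtain ⟨F, hFS, hVF⟩ := h {U} (by rintro W hW; rw [mem_singleton_iff] at hW; rwa [hW])
    (subset_sUnion_of_mem rfl)
  refine hVF.trans (sUnion_subset fun W hW => ?_)
  rw [mem_singleton_iff.mp (hFS hW)]

lemma wayBelow_mono_right {V U U' : Set X} (h : WayBelow V U) (hUU' : U ⊆ U') :
    WayBelow V U' := fun S hS hU' => h S hS (hUU'.trans hU')

lemma wayBelow_mono_left {V' V U : Set X} (hV'V : V' ⊆ V) (h : WayBelow V U) :
    WayBelow V' U := fun S hS hU => by
  obtain ⟨F, hFS, hVF⟩ := h S hS hU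
  exact ⟨F, hFS, hV'V.trans hVF⟩

lemma wayBelow_sUnion_finset {c : Set X} :
    ∀ F : Finset (Set X), (∀ W ∈ F, WayBelow W c) → WayBelow (⋃₀ ↑F) c := by
  classical
  intro F
  induction F using Finset.induction_on with
  | empty => intro _ S hS hc; exact ⟨∅, by simp⟩
  | @insert a F ha ih =>
    intro h S hS hc
    obtain ⟨Fa, hFaS, hFa⟩ := h a (Finset.mem_insert_self a F) S hS hc
    obtain ⟨FF, hFFS, hFF⟩ := ih (fun W hW => h W (Finset.mem_insert_of_mem hW)) S hS hc
    refine ⟨Fa ∪ FF, ?_, ?_⟩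
    · intro W hW
      rcases Finset.mem_union.mp (Finset.mem_coe.mp hW) with h' | h'
      exacts [hFaS h', hFFS h']
    · rw [Finset.coe_insert, sUnion_insert, Finset.coe_union, sUnion_union]
      exact union_subset_union hFa hFF

lemma exists_upper {D : Set {U : Set X // IsOpen U}}
    (hD : DirectedSubset (fun U V : {U : Set X // IsOpen U} => (U : Set X) ⊆ (V : Set X)) D) :
    ∀ F : Finset (Set X), (∀ W ∈ F, ∃ d ∈ D, WayBelow W (d : Set X)) →
      ∃ c ∈ D, ∀ W ∈ F, WayBelow W (c : Set X) := by
  classical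
  intro F
  induction F using Finset.induction_on with
  | empty =>
    intro _
    obtain ⟨d, hd⟩ := hD.1
    exact ⟨d, hd, by simp⟩
  | @insert a F ha ih =>
    intro h
    obtain ⟨c, hcD, hc⟩ := ih (fun W hW => h W (Finset.mem_insert_of_mem hW))
    obtain ⟨d, hdD, hd⟩ := h a (Finset.mem_insert_self a F)
    obtain ⟨e, heD, hde, hce⟩ := hD.2 d hdD c hcD
    refine ⟨e, heD, fun W hW => ?_⟩
    rcases Finset.mem_insert.mp hW with rfl | hWF
    · exact wayBelow_mono_right hd hde
    · exact wayBelow_mono_right (hc W hWF) hce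

lemma sup_eq_sUnion {D : Set {U : Set X // IsOpen U}} {s : {U : Set X // IsOpen U}}
    (hs : IsSupWrt (fun U V : {U : Set X // IsOpen U} => (U : Set X) ⊆ (V : Set X)) D s) :
    (s : Set X) = ⋃₀ ((fun d : {U : Set X // IsOpen U} => (d : Set X)) '' D) := by
  apply Subset.antisymm
  · exact hs.2 ⟨⋃₀ ((fun d : {U : Set X // IsOpen U} => (d : Set X)) '' D),
      isOpen_sUnion (by rintro W ⟨d, hd, rfl⟩; exact d.2)⟩
      (fun d hd => subset_sUnion_of_mem ⟨d, hd, rfl⟩)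
  · exact sUnion_subset (by rintro W ⟨d, hd, rfl⟩; exact hs.1 d hd)

end Aux

/-- `X` is core compact iff the membership set
`G = {(x, U) : x ∈ U}` is open in `X × Σ𝒪(X)`, where `𝒪(X)` carries the Scott topology of
the inclusion order. -/
theorem stmt19 {X : Type u} [tX : TopologicalSpace X] :
    CoreCompact X ↔
      @IsOpen (X × {U : Set X // IsOpen U})
        (@instTopologicalSpaceProd X {U : Set X // IsOpen U} tX
          (scottTop (fun U V : {U : Set X // IsOpen U} => (U : Set X) ⊆ (V : Set X))))
        {p : X × {U : Set X // IsOpen U} | p.1 ∈ (p.2 : Set X)} := by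
    classical
  letI tO : TopologicalSpace {U : Set X // IsOpen U} :=
    scottTop (fun U V : {U : Set X // IsOpen U} => (U : Set X) ⊆ (V : Set X))
  constructor
  · intro hcc
    apply isOpen_prod_iff.mpr
    rintro x U hxU
    obtain ⟨V, hVo, hxV, hVU⟩ := hcc U.val U.2 x hxU
    refine ⟨V, {A : {U : Set X // IsOpen U} | WayBelow V (A : Set X)}, hVo, ?_, hxV, hVU, ?_⟩
    · show ScottOpenWrt _ _
      constructor
      · intro A hA B hAB
        exact wayBelow_mono_right hA hAB
      · intro D hD s hs hsV
        have hcov : (s : Set X) ⊆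
            ⋃₀ {W : Set X | IsOpen W ∧ ∃ d ∈ D, WayBelow W (d : Set X)} := by
          rw [sup_eq_sUnion hs]
          rintro y ⟨W, ⟨d, hd, rfl⟩, hyW⟩
          obtain ⟨V', hV'o, hyV', hV'd⟩ := hcc d.val d.2 y hyW
          exact ⟨V', ⟨hV'o, d, hd, hV'd⟩, hyV'⟩
        obtain ⟨F, hFS, hVF⟩ := hsV _ (fun W hW => hW.1) hcov
        obtain ⟨c, hcD, hc⟩ := exists_upper hD F (fun W hW => (hFS hW).2)
        exact ⟨c, hcD, wayBelow_mono_left hVF (wayBelow_sUnion_finset F hc)⟩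
    · rintro ⟨y, A⟩ ⟨hy, hA⟩
      exact wayBelow_subset A.2 hA hy
  · intro hG U hU x hxU
    obtain ⟨u, v, hu, hv, hxu, hUv, huv⟩ := isOpen_prod_iff.mp hG x ⟨U, hU⟩ hxU
    refine ⟨u, hu, hxu, ?_⟩
    intro S hS hUS
    set D : Set {U : Set X // IsOpen U} :=
      {A | ∃ F : Finset (Set X), ↑F ⊆ S ∧ (A : Set X) = ⋃₀ ↑F} with hDdef
    have hDdir : DirectedSubset
        (fun U V : {U : Set X // IsOpen U} => (U : Set X) ⊆ (V : Set X)) D := by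
      constructor
      · exact ⟨⟨∅, isOpen_empty⟩, ∅, by simp⟩
      · rintro a ⟨Fa, hFa, ha⟩ b ⟨Fb, hFb, hb⟩
        have hsub : ↑(Fa ∪ Fb) ⊆ S := by
          intro W hW
          rcases Finset.mem_union.mp (Finset.mem_coe.mp hW) with h' | h'
          exacts [hFa h', hFb h']
        refine ⟨⟨⋃₀ ↑(Fa ∪ Fb), isOpen_sUnion fun W hW => hS W (hsub hW)⟩,
          ⟨Fa ∪ Fb, hsub, rfl⟩, ?_, ?_⟩
        · show (a : Set X) ⊆ ⋃₀ ↑(Fa ∪ Fb)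
          rw [ha, Finset.coe_union, sUnion_union]
          exact subset_union_left
        · show (b : Set X) ⊆ ⋃₀ ↑(Fa ∪ Fb)
          rw [hb, Finset.coe_union, sUnion_union]
          exact subset_union_right
    have hSopen : IsOpen (⋃₀ S) := isOpen_sUnion hS
    have hsup : IsSupWrt
        (fun U V : {U : Set X // IsOpen U} => (U : Set X) ⊆ (V : Set X)) D ⟨⋃₀ S, hSopen⟩ := by
      constructor
      · rintro d ⟨F, hFS, hF⟩
        show (d : Set X) ⊆ ⋃₀ S
        rw [hF]
        exact sUnion_subset fun W hW => subset_sUnion_of_mem (hFS hW)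
      · intro t ht
        show ⋃₀ S ⊆ (t : Set X)
        refine sUnion_subset fun W hW => ?_
        have : (⟨W, hS W hW⟩ : {U : Set X // IsOpen U}) ∈ D :=
          ⟨{W}, by simpa using hW, by simp⟩
        exact ht _ this
    have hsv : (⟨⋃₀ S, hSopen⟩ : {U : Set X // IsOpen U}) ∈ v := hv.1 hUv hUS
    obtain ⟨d, hdD, hdv⟩ := hv.2 D hDdir _ hsup hsv
    obtain ⟨F, hFS, hF⟩ := hdD
    refine ⟨F, hFS, fun y hy => ?_⟩
    have : y ∈ (d : Set X) := huv (Set.mk_mem_prod hy hdv)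
    rwa [hF] at this
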